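/- arXiv:2003.04225 — 3 statements merged into one kernel-verified Lean document; each statement's English description precedes it below -/
import Mathlib

section
/- Let φ be a tautology-free CNF propositional formula over a set of atoms A and let μ be a partial truth assignment on A. Then μ validates φ if and only if μ entails φ. -/
/-- Propositional formulas over a set of atoms `α`, built from the constants
`⊤`/`⊥`, atoms, negation, conjunction and disjunction
(implication and bi-implication being the standard abbreviations). -/
inductive PropForm (α : Type) : Type
  | tr : PropForm α
  | fls : PropForm α
  | atom : α → PropForm α
  | neg : PropForm α → PropForm α
  | conj : PropForm α → PropForm α → PropForm α
  | disj : PropForm α → PropForm α → PropForm α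

namespace PropForm

variable {α β : Type}

/-- Standard two-valued semantics under a total truth assignment. -/
def eval (η : α → Bool) : PropForm α → Bool
  | tr => true
  | fls => false
  | atom a => η a
  | neg φ => !(eval η φ)
  | conj φ ψ => eval η φ && eval η ψ
  | disj φ ψ => eval η φ || eval η ψ

/-- Three-valued (Kleene) evaluation under a partial truth assignment
(`none` = unknown). -/
def eval3 (μ : α → Option Bool) : PropForm α → Option Bool
  | tr => some true
  | fls => some false
  | atom a => μ a
  | neg φ => Option.map not (eval3 μ φ)
  | conj φ ψ =>
      match eval3 μ φ, eval3 μ ψ with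
      | some false, _ => some false
      | _, some false => some false
      | some true, some true => some true
      | _, _ => none
  | disj φ ψ =>
      match eval3 μ φ, eval3 μ ψ with
      | some true, _ => some true
      | _, some true => some true
      | some false, some false => some false
      | _, _ => none

/-- Simplifying negation: `¬⊤ ⇒ ⊥`, `¬⊥ ⇒ ⊤`. -/
def mkNeg : PropForm α → PropForm α
  | tr => fls
  | fls => tr
  | φ => neg φ

/-- Simplifying conjunction: `⊤∧φ ⇒ φ`, `⊥∧φ ⇒ ⊥`, `φ∧⊤ ⇒ φ`, `φ∧⊥ ⇒ ⊥`. -/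
def mkConj : PropForm α → PropForm α → PropForm α
  | tr, ψ => ψ
  | fls, _ => fls
  | φ, tr => φ
  | _, fls => fls
  | φ, ψ => conj φ ψ

/-- Simplifying disjunction: `⊤∨φ ⇒ ⊤`, `⊥∨φ ⇒ φ`, `φ∨⊤ ⇒ ⊤`, `φ∨⊥ ⇒ φ`. -/
def mkDisj : PropForm α → PropForm α → PropForm α
  | tr, _ => tr
  | fls, ψ => ψ
  | _, tr => tr
  | φ, fls => φ
  | φ, ψ => disj φ ψ

/-- The residual `φ|_μ` of `φ` under a partial assignment `μ`: substitute every
assigned atom with the constant `⊤`/`⊥` given by `μ` and recursively apply the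
standard truth-value propagation rules. -/
def residual (μ : α → Option Bool) : PropForm α → PropForm α
  | tr => tr
  | fls => fls
  | atom a =>
      match μ a with
      | some true => tr
      | some false => fls
      | none => atom a
  | neg φ => mkNeg (residual μ φ)
  | conj φ ψ => mkConj (residual μ φ) (residual μ ψ)
  | disj φ ψ => mkDisj (residual μ φ) (residual μ ψ)

/-- The total assignment `η` extends the partial assignment `μ`. -/
def Extends (μ : α → Option Bool) (η : α → Bool) : Prop :=
  ∀ a b, μ a = some b → η a = b

/-- View a total assignment as a partial one. -/
def totalize (η : α → Bool) : α → Option Bool := fun a => some (η a)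

/-- The partial assignment `μ` *entails* `φ` (`μ ⊨ φ`): every total
assignment extending `μ` satisfies `φ`. -/
def Entails (μ : α → Option Bool) (φ : PropForm α) : Prop :=
  ∀ η : α → Bool, Extends μ η → eval η φ = true

/-- The partial assignment `μ` *validates* `φ` (`μ ⊢ φ`): the residual
`φ|_μ` is syntactically `⊤`. -/
def Validates (μ : α → Option Bool) (φ : PropForm α) : Prop :=
  residual μ φ = tr

/-- `φ` is valid: every total assignment satisfies it. -/
def Valid (φ : PropForm α) : Prop :=
  ∀ η : α → Bool, eval η φ = true

/-- Big disjunction `⋁` of a list of formulas. -/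
def bigDisj : List (PropForm α) → PropForm α
  | [] => fls
  | [φ] => φ
  | φ :: rest => disj φ (bigDisj rest)

/-- Big conjunction `⋀` of a list of formulas. -/
def bigConj : List (PropForm α) → PropForm α
  | [] => tr
  | [φ] => φ
  | φ :: rest => conj φ (bigConj rest)

/-- The cube `⋀μ` of a partial assignment `μ`: the conjunction of the literals
`A` with `μ A = true` and `¬A` with `μ A = false`. -/
noncomputable def cubeOf [Fintype α] (μ : α → Option Bool) : PropForm α :=
  bigConj ((Finset.univ : Finset α).toList.filterMap fun a =>
    match μ a with
    | some true => some (atom a)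
    | some false => some (neg (atom a))
    | none => none)

/-- `φ` is a literal: an atom or the negation of an atom. -/
def IsLit : PropForm α → Prop
  | atom _ => True
  | neg (atom _) => True
  | _ => False

/-- `φ` is a clause: a disjunction of literals. -/
inductive IsClause : PropForm α → Prop
  | lit {φ : PropForm α} : IsLit φ → IsClause φ
  | disj {φ ψ : PropForm α} : IsClause φ → IsClause ψ → IsClause (PropForm.disj φ ψ)

/-- `φ` is a cube: a conjunction of literals. -/
inductive IsCube : PropForm α → Prop
  | lit {φ : PropForm α} : IsLit φ → IsCube φ
  | conj {φ ψ : PropForm α} : IsCube φ → IsCube ψ → IsCube (PropForm.conj φ ψ)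

/-- `φ` is in CNF: a conjunction of clauses. -/
inductive IsCNF : PropForm α → Prop
  | clause {φ : PropForm α} : IsClause φ → IsCNF φ
  | conj {φ ψ : PropForm α} : IsCNF φ → IsCNF ψ → IsCNF (PropForm.conj φ ψ)

/-- The clauses of a CNF formula. -/
def clauses : PropForm α → List (PropForm α)
  | conj φ ψ => clauses φ ++ clauses ψ
  | φ => [φ]

/-- The (signed) literals of a clause: `(true, a)` for the positive literal `a`,
`(false, a)` for the negative literal `¬a`. -/
def lits : PropForm α → List (Bool × α)
  | atom a => [(true, a)]
  | neg (atom a) => [(false, a)]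
  | disj φ ψ => lits φ ++ lits ψ
  | _ => []

/-- A CNF formula is tautology-free iff no clause of it contains both an atom
and its negation. -/
def TautologyFree (φ : PropForm α) : Prop :=
  ∀ c ∈ clauses φ, ¬ ∃ a, (true, a) ∈ lits c ∧ (false, a) ∈ lits c

/-- The atoms occurring in a formula. -/
def atoms : PropForm α → List α
  | tr => []
  | fls => []
  | atom a => [a]
  | neg φ => atoms φ
  | conj φ ψ => atoms φ ++ atoms ψ
  | disj φ ψ => atoms φ ++ atoms ψ

/-- Residual of a formula over `α ⊕ β` under a total assignment on the
`β`-atoms: the resulting formula is over `α`. -/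
def residualB (δ : β → Bool) : PropForm (α ⊕ β) → PropForm α
  | tr => tr
  | fls => fls
  | atom (Sum.inl a) => atom a
  | atom (Sum.inr b) => if δ b then tr else fls
  | neg φ => mkNeg (residualB δ φ)
  | conj φ ψ => mkConj (residualB δ φ) (residualB δ ψ)
  | disj φ ψ => mkDisj (residualB δ φ) (residualB δ ψ)

/-- The Shannon expansion `∃[ψ]_B` of `∃B.ψ`: the disjunction, over all total
truth assignments `δ` on the `β`-atoms, of the residuals `ψ|_δ`. -/
noncomputable def shannon [Fintype β] [DecidableEq β] (ψ : PropForm (α ⊕ β)) : PropForm α :=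
  bigDisj ((Finset.univ : Finset (β → Bool)).toList.map fun δ => residualB δ ψ)

/-- The combined partial assignment `μ∪δ` on `α ⊕ β` of a partial assignment
`μ` on `α` and a total assignment `δ` on `β`. -/
def combine (μ : α → Option Bool) (δ : β → Bool) : α ⊕ β → Option Bool :=
  Sum.elim μ (fun b => some (δ b))

end PropForm

open PropForm

namespace PropForm
variable {α : Type}

lemma eval_mkNeg (η : α → Bool) (φ : PropForm α) :
    eval η (mkNeg φ) = !(eval η φ) := by
  cases φ <;> simp [mkNeg, eval]

lemma eval_mkConj (η : α → Bool) (φ ψ : PropForm α) :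
    eval η (mkConj φ ψ) = (eval η φ && eval η ψ) := by
  cases φ <;> cases ψ <;> simp [mkConj, eval]

lemma eval_mkDisj (η : α → Bool) (φ ψ : PropForm α) :
    eval η (mkDisj φ ψ) = (eval η φ || eval η ψ) := by
  cases φ <;> cases ψ <;> simp [mkDisj, eval]

lemma eval_residual {μ : α → Option Bool} {η : α → Bool} (h : Extends μ η) :
    ∀ φ : PropForm α, eval η (residual μ φ) = eval η φ := by
  intro φ
  induction φ with
  | tr => rfl
  | fls => rfl
  | atom a =>
      cases hμ : μ a with
      | none => simp [residual, hμ, eval]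
      | some b =>
          have := h a b hμ
          cases b <;> simp [residual, hμ, eval, this]
  | neg φ ih => simp [residual, eval_mkNeg, ih, eval]
  | conj φ ψ ih1 ih2 => simp [residual, eval_mkConj, ih1, ih2, eval]
  | disj φ ψ ih1 ih2 => simp [residual, eval_mkDisj, ih1, ih2, eval]

lemma mkNeg_eq_tr (φ : PropForm α) : mkNeg φ = tr ↔ φ = fls := by
  cases φ <;> simp [mkNeg]

lemma mkConj_eq_tr (φ ψ : PropForm α) : mkConj φ ψ = tr ↔ φ = tr ∧ ψ = tr := by
  cases φ <;> cases ψ <;> simp [mkConj]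

lemma mkDisj_eq_tr (φ ψ : PropForm α) : mkDisj φ ψ = tr ↔ φ = tr ∨ ψ = tr := by
  cases φ <;> cases ψ <;> simp [mkDisj]

lemma residual_atom_eq_fls {μ : α → Option Bool} (a : α) :
    residual μ (atom a) = fls ↔ μ a = some false := by
  cases hμ : μ a with
  | none => simp [residual, hμ]
  | some b => cases b <;> simp [residual, hμ]

lemma residual_atom_eq_tr {μ : α → Option Bool} (a : α) :
    residual μ (atom a) = tr ↔ μ a = some true := by
  cases hμ : μ a with
  | none => simp [residual, hμ]
  | some b => cases b <;> simp [residual, hμ]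

lemma clause_residual_tr {μ : α → Option Bool} {c : PropForm α} (hc : IsClause c) :
    residual μ c = tr ↔ ∃ p ∈ lits c, μ p.2 = some p.1 := by
  induction hc with
  | lit h =>
      rename_i φ
      cases φ with
      | atom a => simp [lits, residual_atom_eq_tr]
      | neg φ' =>
          cases φ' with
          | atom a =>
              rw [show residual μ (PropForm.neg (atom a)) = mkNeg (residual μ (atom a)) from rfl,
                mkNeg_eq_tr, residual_atom_eq_fls]
              simp [lits]
          | tr => exact absurd h (by simp [IsLit])
          | fls => exact absurd h (by simp [IsLit])
          | neg => exact absurd h (by simp [IsLit])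
          | conj => exact absurd h (by simp [IsLit])
          | disj => exact absurd h (by simp [IsLit])
      | tr => exact absurd h (by simp [IsLit])
      | fls => exact absurd h (by simp [IsLit])
      | conj => exact absurd h (by simp [IsLit])
      | disj => exact absurd h (by simp [IsLit])
  | disj h1 h2 ih1 ih2 =>
      simp only [residual, mkDisj_eq_tr, lits, List.mem_append, ih1, ih2]
      constructor
      · rintro (⟨p, hp, h⟩ | ⟨p, hp, h⟩) <;> exact ⟨p, by tauto, h⟩
      · rintro ⟨p, hp | hp, h⟩
        · exact Or.inl ⟨p, hp, h⟩
        · exact Or.inr ⟨p, hp, h⟩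

lemma clause_eval_true {η : α → Bool} {c : PropForm α} (hc : IsClause c)
    (h : eval η c = true) : ∃ p ∈ lits c, η p.2 = p.1 := by
  induction hc with
  | lit hl =>
      rename_i φ
      cases φ with
      | atom a => exact ⟨(true, a), by simp [lits], h⟩
      | neg φ' =>
          cases φ' with
          | atom a =>
              refine ⟨(false, a), by simp [lits], ?_⟩
              simpa [eval] using h
          | tr => exact absurd hl (by simp [IsLit])
          | fls => exact absurd hl (by simp [IsLit])
          | neg => exact absurd hl (by simp [IsLit])
          | conj => exact absurd hl (by simp [IsLit])
          | disj => exact absurd hl (by simp [IsLit])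
      | tr => exact absurd hl (by simp [IsLit])
      | fls => exact absurd hl (by simp [IsLit])
      | conj => exact absurd hl (by simp [IsLit])
      | disj => exact absurd hl (by simp [IsLit])
  | disj h1 h2 ih1 ih2 =>
      simp only [eval, Bool.or_eq_true] at h
      rcases h with h | h
      · obtain ⟨p, hp, hs⟩ := ih1 h
        exact ⟨p, by simp [lits, hp], hs⟩
      · obtain ⟨p, hp, hs⟩ := ih2 h
        exact ⟨p, by simp [lits, hp], hs⟩

lemma clauses_of_clause {c : PropForm α} (hc : IsClause c) : clauses c = [c] := by
  induction hc with
  | lit h =>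
      rename_i φ
      cases φ with
      | atom a => rfl
      | neg φ' => rfl
      | tr => rfl
      | fls => rfl
      | conj => exact absurd h (by simp [IsLit])
      | disj => rfl
  | disj _ _ _ _ => rfl

lemma clause_validates_of_entails {μ : α → Option Bool} {c : PropForm α}
    (hc : IsClause c)
    (hTF : ¬ ∃ a, (true, a) ∈ lits c ∧ (false, a) ∈ lits c)
    (hE : Entails μ c) : residual μ c = tr := by
  classical
  by_contra hne
  have hno : ¬ ∃ p ∈ lits c, μ p.2 = some p.1 := by
    rw [← clause_residual_tr hc]; exact hne
  push_neg at hno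
  set η : α → Bool := fun a =>
    match μ a with
    | some b => b
    | none => if (true, a) ∈ lits c then false else true with hη
  have hext : Extends μ η := by
    intro a b hab
    simp [hη, hab]
  have hev := hE η hext
  obtain ⟨⟨s, a⟩, hp, hs⟩ := clause_eval_true hc hev
  have hμa := hno (s, a) hp
  cases hμc : μ a with
  | some b =>
      have : η a = b := by simp [hη, hμc]
      rw [this] at hs
      exact hμa (by rw [hμc, hs])
  | none =>
      cases s with
      | true =>
          have : η a = false := by simp [hη, hμc, hp]
          rw [this] at hs
          exact Bool.noConfusion hs
      | false =>
          have hmem : (true, a) ∈ lits c := by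
            by_contra hmem
            have : η a = true := by simp [hη, hμc, hmem]
            rw [this] at hs
            exact Bool.noConfusion hs
          exact hTF ⟨a, hmem, hp⟩

end PropForm

/-- For a tautology-free CNF formula `φ`, a partial assignment
`μ` validates `φ` iff `μ` entails `φ`. -/
theorem validates_iff_entails_of_tautFree_CNF {α : Type}
    (φ : PropForm α) (hCNF : IsCNF φ) (hTF : TautologyFree φ)
    (μ : α → Option Bool) :
    Validates μ φ ↔ Entails μ φ := by
  constructor
  · intro hv η hext
    have := eval_residual hext φ
    rw [hv] at this
    exact this.symm
  · intro hE
    induction hCNF with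
    | clause hc =>
        rename_i c
        have hTFc : ¬ ∃ a, (true, a) ∈ lits c ∧ (false, a) ∈ lits c := by
          apply hTF
          rw [clauses_of_clause hc]; simp
        exact clause_validates_of_entails hc hTFc hE
    | conj h1 h2 ih1 ih2 =>
        rename_i φ1 φ2
        have hTF1 : TautologyFree φ1 := fun c hc => hTF c (by simp [clauses, hc])
        have hTF2 : TautologyFree φ2 := fun c hc => hTF c (by simp [clauses, hc])
        have hE1 : Entails μ φ1 := fun η hx => by
          have := hE η hx; simp [eval] at this; exact this.1
        have hE2 : Entails μ φ2 := fun η hx => by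
          have := hE η hx; simp [eval] at this; exact this.2
        have hv1 := ih1 hTF1 hE1
        have hv2 := ih2 hTF2 hE2
        show residual μ (PropForm.conj φ1 φ2) = tr
        simp only [PropForm.residual, mkConj_eq_tr]
        exact ⟨hv1, hv2⟩
end

section
/- Tseitin CNF-ization can lose validation information: for φ = A₁ ∨ (A₂ ∧ A₃) over A = {A₁, A₂, A₃}, its Tseitin CNF-ization ψ = (A₁ ∨ B₁) ∧ (¬B₁ ∨ A₂) ∧ (¬B₁ ∨ A₃) ∧ (B₁ ∨ ¬A₂ ∨ ¬A₃) over A ∪ {B₁}, and μ = {A₁ ↦ true}: μ validates φ, yet there is no total truth assignment δ on {B₁} such that μ∪δ validates ψ. -/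
open PropForm

/-- `φ = A₁ ∨ (A₂ ∧ A₃)` over `A = {A₁,A₂,A₃}`. -/
def phi15 : PropForm (Fin 3) :=
  PropForm.disj (PropForm.atom 0) (PropForm.conj (PropForm.atom 1) (PropForm.atom 2))

/-- The Tseitin CNF-ization
`ψ = (A₁ ∨ B₁) ∧ (¬B₁ ∨ A₂) ∧ (¬B₁ ∨ A₃) ∧ (B₁ ∨ ¬A₂ ∨ ¬A₃)` over `A ∪ {B₁}`. -/
def psi15 : PropForm (Fin 3 ⊕ Fin 1) :=
  PropForm.conj
    (PropForm.disj (PropForm.atom (Sum.inl 0)) (PropForm.atom (Sum.inr 0)))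
    (PropForm.conj
      (PropForm.disj (PropForm.neg (PropForm.atom (Sum.inr 0))) (PropForm.atom (Sum.inl 1)))
      (PropForm.conj
        (PropForm.disj (PropForm.neg (PropForm.atom (Sum.inr 0))) (PropForm.atom (Sum.inl 2)))
        (PropForm.disj (PropForm.atom (Sum.inr 0))
          (PropForm.disj (PropForm.neg (PropForm.atom (Sum.inl 1)))
            (PropForm.neg (PropForm.atom (Sum.inl 2)))))))

/-- Tseitin CNF-ization can lose validation information:
`μ = {A₁ ↦ true}` validates `φ`, yet no total assignment `δ` on `{B₁}` makes
`μ∪δ` validate `ψ`. -/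
theorem tseitin_loses_validation :
    Validates (fun i : Fin 3 => if i = 0 then some true else none) phi15 ∧
    ¬ ∃ δ : Fin 1 → Bool,
        Validates (combine (fun i : Fin 3 => if i = 0 then some true else none) δ) psi15 := by
  constructor
  · rfl
  · rintro ⟨δ, h⟩
    have hδ : δ = fun _ => δ 0 := funext fun i => by fin_cases i; rfl
    rw [hδ] at h
    cases hb : δ 0 <;> rw [hb] at h <;> simp [Validates, psi15, PropForm.residual, PropForm.mkConj, PropForm.mkDisj, PropForm.mkNeg, combine] at h
end

section
/- Tseitin CNF-ization can lose entailment information: for φ = (A₁ ∧ A₂) ∨ (A₁ ∧ ¬A₂) over A = {A₁, A₂}, its Tseitin CNF-ization ψ = (B₁ ∨ B₂) ∧ (¬B₁ ∨ A₁) ∧ (¬B₁ ∨ A₂) ∧ (B₁ ∨ ¬A₁ ∨ ¬A₂) ∧ (¬B₂ ∨ A₁) ∧ (¬B₂ ∨ ¬A₂) ∧ (B₂ ∨ ¬A₁ ∨ A₂) over A ∪ {B₁, B₂}, and μ = {A₁ ↦ true}: μ entails φ, yet there is no total truth assignment δ on {B₁, B₂} such that μ∪δ entails ψ. -/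
open PropForm

/-- `φ = (A₁ ∧ A₂) ∨ (A₁ ∧ ¬A₂)` over `A = {A₁,A₂}`. -/
def phi16 : PropForm (Fin 2) :=
  PropForm.disj
    (PropForm.conj (PropForm.atom 0) (PropForm.atom 1))
    (PropForm.conj (PropForm.atom 0) (PropForm.neg (PropForm.atom 1)))

/-- The Tseitin CNF-ization `ψ = (B₁ ∨ B₂) ∧ (¬B₁ ∨ A₁) ∧ (¬B₁ ∨ A₂) ∧
(B₁ ∨ ¬A₁ ∨ ¬A₂) ∧ (¬B₂ ∨ A₁) ∧ (¬B₂ ∨ ¬A₂) ∧ (B₂ ∨ ¬A₁ ∨ A₂)` over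
`A ∪ {B₁,B₂}` (`A_i = Sum.inl`, `B_j = Sum.inr`). -/
def psi16 : PropForm (Fin 2 ⊕ Fin 2) :=
  PropForm.conj
    (PropForm.disj (PropForm.atom (Sum.inr 0)) (PropForm.atom (Sum.inr 1)))
    (PropForm.conj
      (PropForm.disj (PropForm.neg (PropForm.atom (Sum.inr 0))) (PropForm.atom (Sum.inl 0)))
      (PropForm.conj
        (PropForm.disj (PropForm.neg (PropForm.atom (Sum.inr 0))) (PropForm.atom (Sum.inl 1)))
        (PropForm.conj
          (PropForm.disj (PropForm.atom (Sum.inr 0))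
            (PropForm.disj (PropForm.neg (PropForm.atom (Sum.inl 0)))
              (PropForm.neg (PropForm.atom (Sum.inl 1)))))
          (PropForm.conj
            (PropForm.disj (PropForm.neg (PropForm.atom (Sum.inr 1))) (PropForm.atom (Sum.inl 0)))
            (PropForm.conj
              (PropForm.disj (PropForm.neg (PropForm.atom (Sum.inr 1)))
                (PropForm.neg (PropForm.atom (Sum.inl 1))))
              (PropForm.disj (PropForm.atom (Sum.inr 1))
                (PropForm.disj (PropForm.neg (PropForm.atom (Sum.inl 0)))
                  (PropForm.atom (Sum.inl 1)))))))))

/-- Tseitin CNF-ization can lose entailment information: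
`μ = {A₁ ↦ true}` entails `φ`, yet no total assignment `δ` on `{B₁,B₂}` makes
`μ∪δ` entail `ψ`. -/
theorem tseitin_loses_entailment :
    Entails (fun i : Fin 2 => if i = 0 then some true else none) phi16 ∧
    ¬ ∃ δ : Fin 2 → Bool,
        Entails (combine (fun i : Fin 2 => if i = 0 then some true else none) δ) psi16 := by
  constructor
  · intro η hη
    have h0 : η 0 = true := hη 0 true (by simp)
    simp [phi16, eval, h0]

  · rintro ⟨δ, hδ⟩
    have hη : Extends (combine (fun i : Fin 2 => if i = 0 then some true else none) δ)
        (Sum.elim (fun i : Fin 2 => if i = 0 then true else !(δ 0)) δ) := by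
      rintro (a | b) v hv
      · fin_cases a
        · simp_all [combine]
        · simp [combine] at hv
      · simp_all [combine]
    have := hδ _ hη
    simp [psi16, eval] at this
    cases h : δ 0 <;> simp [h] at this
end
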